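/- Let D be a finite universal distance set with at least two blocks, let m be the maximum of the first block, let M be the countable Urysohn space with distance set D, and let ~ be the equivalence relation d(x,y) ≤ m. Fix a ∈ M and let C = M \ {x ∈ M : d(a,x) < m}. Then the subspace induced on C is isometric to M. -/

import Mathlib

namespace Sauer

def IsMetricTriple (a b c : ℝ) : Prop := a ≤ b + c ∧ b ≤ a + c ∧ c ≤ a + b

def IsUniversalDist (D : Set ℝ) : Prop :=
  D.Finite ∧ (0 : ℝ) ∈ D ∧ (∀ d ∈ D, 0 ≤ d) ∧
    ∀ s x₀ y₀ x₁ y₁ : ℝ, s ∈ D → x₀ ∈ D → y₀ ∈ D → x₁ ∈ D → y₁ ∈ D →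
      0 < x₀ → 0 < y₀ → 0 < x₁ → 0 < y₁ →
      IsMetricTriple x₀ y₀ s → IsMetricTriple x₁ y₁ s →
      ∃ t ∈ D, 0 < t ∧ IsMetricTriple x₀ x₁ t ∧ IsMetricTriple y₀ y₁ t

open Classical in
noncomputable def dsucc (D : Set ℝ) (r : ℝ) : ℝ :=
  if ({s | s ∈ D ∧ r < s}).Nonempty then sInf {s | s ∈ D ∧ r < s} else r

noncomputable def dpred (D : Set ℝ) (r : ℝ) : ℝ := sSup {s | s ∈ D ∧ s < r}

def IsBlock (D B : Set ℝ) : Prop :=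
  ∃ (n : ℕ) (b : ℕ → ℝ),
    B = {x | ∃ i, i ≤ n ∧ x = b i} ∧
    (∀ i ≤ n, b i ∈ D) ∧ 0 < b 0 ∧
    (∀ i < n, b i < b (i + 1)) ∧
    (∀ y ∈ D, y < b 0 → 2 * y < b 0) ∧
    (∀ i < n, b (i + 1) = dsucc D (b i)) ∧
    (∀ i < n, b (i + 1) ≤ b i + b 0)

def IsJump (D : Set ℝ) (r : ℝ) : Prop := r ∈ D ∧ ∀ s ∈ D, r < s → 2 * r < s

structure Katetov (D : Set ℝ) (M : Type) [MetricSpace M] where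
  dom : Finset M
  f : M → ℝ
  mem : ∀ x ∈ dom, f x ∈ D
  pos : ∀ x ∈ dom, 0 < f x
  ineq1 : ∀ x ∈ dom, ∀ y ∈ dom, |f x - f y| ≤ dist x y
  ineq2 : ∀ x ∈ dom, ∀ y ∈ dom, dist x y ≤ f x + f y

variable {D : Set ℝ} {M : Type} [MetricSpace M]

def orb (t : Katetov D M) : Set M :=
  {y | y ∉ t.dom ∧ ∀ x ∈ t.dom, dist y x = t.f x}

noncomputable def rank (t : Katetov D M) : ℝ := sInf (t.f '' ↑t.dom)

def orbDistSet (s t : Katetov D M) : Set ℝ :=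
  {m | ∃ x ∈ orb s, ∃ y ∈ orb t, dist x y = m}

noncomputable def dminK (s t : Katetov D M) : ℝ := sInf (orbDistSet s t)

noncomputable def dmin (A B : Set M) : ℝ := sInf {d | ∃ x ∈ A, ∃ y ∈ B, dist x y = d}

def IsHomogeneous (M : Type) [MetricSpace M] : Prop :=
  ∀ (A : Finset M) (f : M → M),
    (∀ x ∈ A, ∀ y ∈ A, dist (f x) (f y) = dist x y) →
    ∃ g : M ≃ᵢ M, ∀ x ∈ A, g x = f x

def IsUrysohn (D : Set ℝ) (M : Type) [MetricSpace M] : Prop :=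
  Countable M ∧ (∀ x y : M, dist x y ∈ D) ∧ IsHomogeneous M ∧
    ∀ (N : Type) [MetricSpace N], Finite N → (∀ x y : N, dist x y ∈ D) →
      ∃ f : N → M, Isometry f

/-! ### Auxiliary machinery -/

/-- The one-point extension distance on `Option {x // x ∈ F}`. -/
noncomputable def optDist (F : Finset M) (f : M → ℝ) :
    Option {x : M // x ∈ F} → Option {x : M // x ∈ F} → ℝ
  | none, none => 0
  | none, some x => f x.1
  | some x, none => f x.1
  | some x, some y => dist x.1 y.1

open Classical in
/-- Retraction used to apply homogeneity. -/
noncomputable def pullback (F : Finset M) (e : Option {x : M // x ∈ F} → M) : M → M :=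
  fun z => if hz : ∃ x : {x : M // x ∈ F}, e (some x) = z then hz.choose.1 else z

lemma pullback_eq (F : Finset M) (e : Option {x : M // x ∈ F} → M)
    (hinj : Function.Injective e) (x : {x : M // x ∈ F}) :
    pullback F e (e (some x)) = x.1 := by
  have hz : ∃ y : {x : M // x ∈ F}, e (some y) = e (some x) := ⟨x, rfl⟩
  rw [pullback, dif_pos hz]
  have hs := hz.choose_spec
  have : (some hz.choose : Option {x : M // x ∈ F}) = some x := hinj hs
  rw [Option.some_inj.mp this]

/-- Realization of abstract Katetov functions in a Urysohn space. -/
lemma realize (hM : IsUrysohn D M) (h0 : (0:ℝ) ∈ D) (F : Finset M) (f : M → ℝ)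
    (hfD : ∀ x ∈ F, f x ∈ D) (hpos : ∀ x ∈ F, 0 < f x)
    (hf1 : ∀ x ∈ F, ∀ y ∈ F, |f x - f y| ≤ dist x y)
    (hf2 : ∀ x ∈ F, ∀ y ∈ F, dist x y ≤ f x + f y) :
    ∃ q : M, ∀ x ∈ F, dist q x = f x := by
  classical
  obtain ⟨-, hdD, hhom, huniv⟩ := hM
  letI : MetricSpace (Option {x : M // x ∈ F}) :=
    { dist := optDist F f
      dist_self := by rintro (_ | x) <;> simp [optDist]
      dist_comm := by rintro (_ | x) (_ | y) <;> simp [optDist, dist_comm]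
      dist_triangle := by
        rintro (_ | x) (_ | y) (_ | z) <;> simp only [optDist]
        · norm_num
        · norm_num
        · have := (hpos y.1 y.2).le; linarith
        · have h := abs_le.mp (hf1 y.1 y.2 z.1 z.2); linarith [h.1, h.2]
        · norm_num
        · exact hf2 x.1 x.2 z.1 z.2
        · have h := abs_le.mp (hf1 x.1 x.2 y.1 y.2); linarith [h.1, h.2]
        · exact dist_triangle x.1 y.1 z.1
      eq_of_dist_eq_zero := by
        rintro (_ | x) (_ | y) h
        · rfl
        · have h' : f y.1 = 0 := h
          exact absurd h' (ne_of_gt (hpos y.1 y.2))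
        · have h' : f x.1 = 0 := h
          exact absurd h' (ne_of_gt (hpos x.1 x.2))
        · have h' : dist x.1 y.1 = 0 := h
          exact congrArg some (Subtype.ext (dist_eq_zero.mp h')) }
  have hdist : ∀ p q : Option {x : M // x ∈ F}, dist p q = optDist F f p q := fun _ _ => rfl
  obtain ⟨e, he⟩ := huniv (Option {x : M // x ∈ F}) inferInstance (by
    rintro (_ | x) (_ | y)
    · exact h0
    · exact hfD y.1 y.2
    · exact hfD x.1 x.2
    · exact hdD x.1 y.1)
  set A : Finset M := F.attach.image (fun x => e (some x)) with hA
  have hiso_on : ∀ z ∈ A, ∀ w ∈ A, dist (pullback F e z) (pullback F e w) = dist z w := by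
    intro z hz w hw
    obtain ⟨x, -, rfl⟩ := Finset.mem_image.mp hz
    obtain ⟨y, -, rfl⟩ := Finset.mem_image.mp hw
    rw [pullback_eq F e he.injective x, pullback_eq F e he.injective y,
      he.dist_eq, hdist]
    rfl
  obtain ⟨g, hg⟩ := hhom A (pullback F e) hiso_on
  refine ⟨g (e none), fun x hx => ?_⟩
  have hxA : e (some ⟨x, hx⟩) ∈ A :=
    Finset.mem_image_of_mem _ (Finset.mem_attach F ⟨x, hx⟩)
  have h3 : g (e (some ⟨x, hx⟩)) = x := by
    rw [hg _ hxA, pullback_eq F e he.injective ⟨x, hx⟩]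
  calc dist (g (e none)) x = dist (g (e none)) (g (e (some ⟨x, hx⟩))) := by rw [h3]
    _ = dist (e none) (e (some ⟨x, hx⟩)) := g.dist_eq _ _
    _ = f x := by rw [he.dist_eq, hdist]; rfl

open Classical in
/-- The Katetov function induced on the second coordinates of a partial isometry. -/
noncomputable def katFun (L : List (M × M)) (x : M) : M → ℝ :=
  fun y => if h : ∃ q ∈ L, q.2 = y then dist x h.choose.1 else 0

lemma katFun_eq {L : List (M × M)}
    (hL1 : ∀ p ∈ L, ∀ q ∈ L, dist p.2 q.2 = dist p.1 q.1) (x : M)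
    {q : M × M} (hq : q ∈ L) : katFun L x q.2 = dist x q.1 := by
  have h : ∃ r ∈ L, r.2 = q.2 := ⟨q, hq, rfl⟩
  rw [katFun, dif_pos h]
  obtain ⟨hmem, heq⟩ := h.choose_spec
  congr 1
  have h1 : dist h.choose.1 q.1 = 0 := by
    rw [← hL1 _ hmem _ hq, heq, dist_self]
  exact dist_eq_zero.mp h1

/-- Realize a new point over the second coordinates of a partial isometry. -/
lemma realizeL (hM : IsUrysohn D M) (h0 : (0:ℝ) ∈ D) (L : List (M × M))
    (hL1 : ∀ p ∈ L, ∀ q ∈ L, dist p.2 q.2 = dist p.1 q.1) (x : M)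
    (hx : ∀ q ∈ L, q.1 ≠ x) :
    ∃ z : M, ∀ q ∈ L, dist z q.2 = dist x q.1 := by
  classical
  have hmem : ∀ y, y ∈ (L.map Prod.snd).toFinset ↔ ∃ q ∈ L, q.2 = y := by
    intro y; simp [List.mem_toFinset, List.mem_map]
  obtain ⟨z, hz⟩ := realize hM h0 (L.map Prod.snd).toFinset (katFun L x)
    (by
      intro y hy; obtain ⟨q, hq, rfl⟩ := (hmem y).mp hy
      rw [katFun_eq hL1 x hq]; exact hM.2.1 x q.1)
    (by
      intro y hy; obtain ⟨q, hq, rfl⟩ := (hmem y).mp hy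
      rw [katFun_eq hL1 x hq]; exact dist_pos.mpr (Ne.symm (hx q hq)))
    (by
      intro y hy y' hy'
      obtain ⟨q, hq, rfl⟩ := (hmem y).mp hy
      obtain ⟨r, hr, rfl⟩ := (hmem y').mp hy'
      rw [katFun_eq hL1 x hq, katFun_eq hL1 x hr, hL1 q hq r hr,
        dist_comm x q.1, dist_comm x r.1]
      exact abs_dist_sub_le q.1 r.1 x)
    (by
      intro y hy y' hy'
      obtain ⟨q, hq, rfl⟩ := (hmem y).mp hy
      obtain ⟨r, hr, rfl⟩ := (hmem y').mp hy'
      rw [katFun_eq hL1 x hq, katFun_eq hL1 x hr, hL1 q hq r hr, dist_comm x q.1]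
      exact dist_triangle q.1 x r.1)
  refine ⟨z, fun q hq => ?_⟩
  rw [hz q.2 ((hmem q.2).mpr ⟨q, hq, rfl⟩), katFun_eq hL1 x hq]

/-- Forth step: the new image can be chosen far from `a`. -/
lemma step_forth (hM : IsUrysohn D M) (h0 : (0:ℝ) ∈ D) (a : M) (m : ℝ)
    (hmD : m ∈ D) (hmpos : 0 < m) (L : List (M × M))
    (hL1 : ∀ p ∈ L, ∀ q ∈ L, dist p.2 q.2 = dist p.1 q.1)
    (hL2 : ∀ p ∈ L, m ≤ dist a p.2) (x : M) :
    ∃ y, m ≤ dist a y ∧ ∀ q ∈ L, dist y q.2 = dist x q.1 := by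
  classical
  by_cases hx : ∃ q ∈ L, q.1 = x
  · obtain ⟨q, hqL, hq1⟩ := hx
    exact ⟨q.2, hL2 q hqL, fun r hr => by rw [hL1 q hqL r hr, hq1]⟩
  push_neg at hx
  obtain ⟨z, hz⟩ := realizeL hM h0 L hL1 x hx
  by_cases hza : m ≤ dist a z
  · exact ⟨z, hza, hz⟩
  push_neg at hza
  -- extend the Katetov function to `a` with value `m`
  have hmem : ∀ y, y ∈ (L.map Prod.snd).toFinset ↔ ∃ q ∈ L, q.2 = y := by
    intro y; simp [List.mem_toFinset, List.mem_map]
  have haF : a ∉ (L.map Prod.snd).toFinset := by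
    intro hmemA
    obtain ⟨q, hq, hq2⟩ := (hmem a).mp hmemA
    have := hL2 q hq
    rw [hq2, dist_self] at this
    linarith
  have hval : ∀ y ∈ (L.map Prod.snd).toFinset,
      Function.update (katFun L x) a m y = katFun L x y := by
    intro y hy
    have hya : y ≠ a := by rintro rfl; exact haF hy
    exact Function.update_of_ne hya _ _
  have hzy : ∀ q ∈ L, dist z q.2 = katFun L x q.2 := by
    intro q hq; rw [hz q hq, katFun_eq hL1 x hq]
  -- key inequalities
  have key1 : ∀ q ∈ L, |m - katFun L x q.2| ≤ dist a q.2 := by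
    intro q hq
    have h1 : m ≤ dist a q.2 := hL2 q hq
    have h2 : katFun L x q.2 = dist z q.2 := (hzy q hq).symm
    have h3 : dist z q.2 ≤ dist z a + dist a q.2 := dist_triangle _ _ _
    have h4 : dist z a = dist a z := dist_comm _ _
    have h5 : (0:ℝ) ≤ katFun L x q.2 := by rw [h2]; exact dist_nonneg
    rw [abs_le]
    constructor <;> nlinarith [dist_nonneg (x := a) (y := z)]
  have key2 : ∀ q ∈ L, dist a q.2 ≤ m + katFun L x q.2 := by
    intro q hq
    have h2 : katFun L x q.2 = dist z q.2 := (hzy q hq).symm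
    have h3 : dist a q.2 ≤ dist a z + dist z q.2 := dist_triangle _ _ _
    linarith
  obtain ⟨w, hw⟩ := realize hM h0 (insert a ((L.map Prod.snd).toFinset))
    (Function.update (katFun L x) a m)
    (by
      intro y hy
      rcases Finset.mem_insert.mp hy with rfl | hy'
      · rw [Function.update_self]; exact hmD
      · rw [hval y hy']
        obtain ⟨q, hq, rfl⟩ := (hmem y).mp hy'
        rw [katFun_eq hL1 x hq]; exact hM.2.1 x q.1)
    (by
      intro y hy
      rcases Finset.mem_insert.mp hy with rfl | hy'
      · rw [Function.update_self]; exact hmpos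
      · rw [hval y hy']
        obtain ⟨q, hq, rfl⟩ := (hmem y).mp hy'
        rw [katFun_eq hL1 x hq]; exact dist_pos.mpr (Ne.symm (hx q hq)))
    (by
      intro y hy y' hy'
      rcases Finset.mem_insert.mp hy with rfl | hy2 <;>
        rcases Finset.mem_insert.mp hy' with h' | hy2'
      · rw [h', Function.update_self]; simp
      · rw [Function.update_self, hval y' hy2']
        obtain ⟨q, hq, rfl⟩ := (hmem y').mp hy2'
        exact key1 q hq
      · rw [h', Function.update_self, hval y hy2]
        obtain ⟨q, hq, rfl⟩ := (hmem y).mp hy2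
        rw [abs_sub_comm, dist_comm]
        exact key1 q hq
      · rw [hval y hy2, hval y' hy2']
        obtain ⟨q, hq, rfl⟩ := (hmem y).mp hy2
        obtain ⟨r, hr, rfl⟩ := (hmem y').mp hy2'
        rw [katFun_eq hL1 x hq, katFun_eq hL1 x hr, hL1 q hq r hr,
          dist_comm x q.1, dist_comm x r.1]
        exact abs_dist_sub_le q.1 r.1 x)
    (by
      intro y hy y' hy'
      rcases Finset.mem_insert.mp hy with rfl | hy2 <;>
        rcases Finset.mem_insert.mp hy' with h' | hy2'
      · rw [h', Function.update_self, dist_self]; linarith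
      · rw [Function.update_self, hval y' hy2']
        obtain ⟨q, hq, rfl⟩ := (hmem y').mp hy2'
        exact key2 q hq
      · rw [h', Function.update_self, hval y hy2]
        obtain ⟨q, hq, rfl⟩ := (hmem y).mp hy2
        rw [dist_comm]
        have := key2 q hq; linarith
      · rw [hval y hy2, hval y' hy2']
        obtain ⟨q, hq, rfl⟩ := (hmem y).mp hy2
        obtain ⟨r, hr, rfl⟩ := (hmem y').mp hy2'
        rw [katFun_eq hL1 x hq, katFun_eq hL1 x hr, hL1 q hq r hr, dist_comm x q.1]
        exact dist_triangle q.1 x r.1)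
  have hwa : dist w a = m := by
    rw [hw a (Finset.mem_insert_self _ _), Function.update_self]
  refine ⟨w, by rw [dist_comm]; exact le_of_eq hwa.symm, fun q hq => ?_⟩
  have hq2 : q.2 ∈ insert a ((L.map Prod.snd).toFinset) :=
    Finset.mem_insert_of_mem ((hmem q.2).mpr ⟨q, hq, rfl⟩)
  rw [hw q.2 hq2, hval q.2 ((hmem q.2).mpr ⟨q, hq, rfl⟩), katFun_eq hL1 x hq]

/-- Back step. -/
lemma step_back (hM : IsUrysohn D M) (h0 : (0:ℝ) ∈ D) (L : List (M × M))
    (hL1 : ∀ p ∈ L, ∀ q ∈ L, dist p.2 q.2 = dist p.1 q.1) (c : M) :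
    ∃ z, ∀ q ∈ L, dist c q.2 = dist z q.1 := by
  classical
  by_cases hc : ∃ q ∈ L, q.2 = c
  · obtain ⟨q, hqL, hq2⟩ := hc
    exact ⟨q.1, fun r hr => by rw [← hq2, hL1 q hqL r hr]⟩
  push_neg at hc
  obtain ⟨z, hz⟩ := realizeL hM h0 (L.map Prod.swap)
    (by
      intro p hp q hq
      obtain ⟨p', hp', rfl⟩ := List.mem_map.mp hp
      obtain ⟨q', hq', rfl⟩ := List.mem_map.mp hq
      exact (hL1 p' hp' q' hq').symm) c
    (by
      intro q hq
      obtain ⟨q', hq', rfl⟩ := List.mem_map.mp hq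
      exact hc q' hq')
  refine ⟨z, fun q hq => ?_⟩
  have := hz (q.2, q.1) (List.mem_map.mpr ⟨q, hq, rfl⟩)
  simpa [dist_comm] using this.symm

/-- Generic recursive construction of a sequence with invariants. -/
lemma buildSeq {α : Type} (P : List α → Prop) (Q : ℕ → α → List α → Prop)
    (h0 : P []) (hstep : ∀ L, P L → ∀ n, ∃ x, Q n x L ∧ P (x :: L)) :
    ∃ (g : ℕ → α) (Fl : ℕ → List α),
      ∀ n, Q n (g n) (Fl n) ∧ P (Fl n) ∧ Fl (n + 1) = g n :: Fl n := by
  let F : ℕ → {L : List α // P L} := fun n =>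
    Nat.rec ⟨[], h0⟩
      (fun k ih => ⟨(hstep ih.1 ih.2 k).choose :: ih.1, (hstep ih.1 ih.2 k).choose_spec.2⟩) n
  exact ⟨fun n => (hstep (F n).1 (F n).2 n).choose, fun n => (F n).1,
    fun n => ⟨(hstep (F n).1 (F n).2 n).choose_spec.1, (F n).2, rfl⟩⟩

theorem statement18 (D : Set ℝ) (hD : IsUniversalDist D)
    (B : Set ℝ) (hB : IsBlock D B) (hfirst : ∀ d ∈ D, 0 < d → sInf B ≤ d)
    (m : ℝ) (hm : m = sSup B) (htwo : ∃ d ∈ D, m < d)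
    (M : Type) [MetricSpace M] (hM : IsUrysohn D M) (a : M)
    (C : Set M) (hC : C = {x : M | ¬ dist a x < m}) :
    ∃ f : M → M, Isometry f ∧ Set.range f = C := by
  classical
  have h0D : (0:ℝ) ∈ D := hD.2.1
  obtain ⟨n, b, hBeq, hbD, hb0, hmono, hsmall, hsucc, hstep'⟩ := hB
  have hBne : B.Nonempty := ⟨b 0, by rw [hBeq]; exact ⟨0, Nat.zero_le _, rfl⟩⟩
  have hBfin : B.Finite := by
    rw [hBeq]
    have hsub : {x | ∃ i, i ≤ n ∧ x = b i} ⊆ b '' (Set.Iic n) := by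
      rintro x ⟨i, hi, rfl⟩; exact ⟨i, hi, rfl⟩
    exact ((Set.finite_Iic n).image b).subset hsub
  have hmB : m ∈ B := by rw [hm]; exact hBne.csSup_mem hBfin
  have hmD : m ∈ D := by
    rw [hBeq] at hmB; obtain ⟨i, hi, hmi⟩ := hmB; rw [hmi]; exact hbD i hi
  have hmpos : 0 < m := by
    have hb0m : b 0 ≤ m := by
      rw [hm]; exact le_csSup hBfin.bddAbove (by rw [hBeq]; exact ⟨0, Nat.zero_le _, rfl⟩)
    linarith
  have hCmem : ∀ x : M, x ∈ C ↔ m ≤ dist a x := by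
    intro x; rw [hC]; exact not_lt
  -- C is nonempty
  obtain ⟨d, hdDmem, hmd⟩ := htwo
  have hCne : ∃ c : M, c ∈ C := by
    obtain ⟨q, hq⟩ := realize hM h0D {a} (fun _ => d)
      (fun x _ => hdDmem) (fun x _ => lt_trans hmpos hmd)
      (by intro x hx y hy; simp at hx hy; subst hx; subst hy; simp)
      (by
        intro x hx y hy; simp at hx hy; subst hx; subst hy
        simp only [dist_self]
        have : 0 < d := lt_trans hmpos hmd
        linarith)
    refine ⟨q, (hCmem q).mpr ?_⟩
    rw [dist_comm, hq a (Finset.mem_singleton_self a)]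
    exact hmd.le
  -- enumerations
  haveI : Countable M := hM.1
  haveI : Nonempty M := ⟨a⟩
  obtain ⟨eM, heM⟩ := exists_surjective_nat M
  obtain ⟨c0, hc0⟩ := hCne
  haveI : Nonempty C := ⟨⟨c0, hc0⟩⟩
  obtain ⟨eC0, heC0⟩ := exists_surjective_nat C
  -- the recursive construction
  obtain ⟨g, Fl, hgFl⟩ := buildSeq
    (fun (L : List (M × M)) => (∀ p ∈ L, ∀ q ∈ L, dist p.2 q.2 = dist p.1 q.1) ∧ ∀ p ∈ L, m ≤ dist a p.2)
    (fun (k : ℕ) (p : M × M) (L : List (M × M)) => m ≤ dist a p.2 ∧ (∀ q ∈ L, dist p.2 q.2 = dist p.1 q.1) ∧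
      (if k % 2 = 0 then p.1 = eM (k / 2) else p.2 = (eC0 (k / 2)).1))
    (by constructor <;> simp)
    (by
      intro L hL k
      by_cases hk : k % 2 = 0
      · obtain ⟨y, hy1, hy2⟩ := step_forth hM h0D a m hmD hmpos L hL.1 hL.2 (eM (k / 2))
        refine ⟨(eM (k / 2), y), ⟨hy1, hy2, by rw [if_pos hk]⟩, ?_, ?_⟩
        · intro p hp q hq
          rcases List.mem_cons.mp hp with rfl | hp' <;>
            rcases List.mem_cons.mp hq with rfl | hq'
          · simp
          · exact hy2 q hq'
          · rw [dist_comm, hy2 p hp', dist_comm]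
          · exact hL.1 p hp' q hq'
        · intro p hp
          rcases List.mem_cons.mp hp with rfl | hp'
          · exact hy1
          · exact hL.2 p hp'
      · obtain ⟨z, hz⟩ := step_back hM h0D L hL.1 (eC0 (k / 2)).1
        have hcC : m ≤ dist a (eC0 (k / 2)).1 := (hCmem _).mp (eC0 (k / 2)).2
        refine ⟨(z, (eC0 (k / 2)).1), ⟨hcC, hz, by rw [if_neg hk]⟩, ?_, ?_⟩
        · intro p hp q hq
          rcases List.mem_cons.mp hp with rfl | hp' <;>
            rcases List.mem_cons.mp hq with rfl | hq'
          · simp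
          · exact hz q hq'
          · rw [dist_comm, hz p hp', dist_comm]
          · exact hL.1 p hp' q hq'
        · intro p hp
          rcases List.mem_cons.mp hp with rfl | hp'
          · exact hcC
          · exact hL.2 p hp')
  -- basic properties of the sequence
  have hmemFl : ∀ k i, i < k → g i ∈ Fl k := by
    intro k
    induction k with
    | zero => intro i hi; omega
    | succ k ih =>
      intro i hi
      rw [(hgFl k).2.2]
      rcases Nat.lt_succ_iff_lt_or_eq.mp hi with h | rfl
      · exact List.mem_cons_of_mem _ (ih i h)
      · exact List.mem_cons_self
  have hiso2 : ∀ i j, dist (g i).2 (g j).2 = dist (g i).1 (g j).1 := by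
    intro i j
    have hik : g i ∈ Fl (max i j + 1) := hmemFl _ _ (by omega)
    have hjk : g j ∈ Fl (max i j + 1) := hmemFl _ _ (by omega)
    exact (hgFl (max i j + 1)).2.1.1 _ hik _ hjk
  have hC2 : ∀ i, (g i).2 ∈ C := fun i => (hCmem _).mpr (hgFl i).1.1
  have hcov1 : ∀ x : M, ∃ i, (g i).1 = x := by
    intro x
    obtain ⟨k, rfl⟩ := heM x
    refine ⟨2 * k, ?_⟩
    have h := (hgFl (2 * k)).1.2.2
    rw [if_pos (by omega)] at h
    rw [h]
    congr 1
    omega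
  have hcov2 : ∀ c : M, c ∈ C → ∃ i, (g i).2 = c := by
    intro c hc
    obtain ⟨k, hk⟩ := heC0 ⟨c, hc⟩
    refine ⟨2 * k + 1, ?_⟩
    have h := (hgFl (2 * k + 1)).1.2.2
    rw [if_neg (by omega)] at h
    rw [h]
    have h2 : (2 * k + 1) / 2 = k := by omega
    rw [h2, hk]
  -- the isometry
  refine ⟨fun x => (g (hcov1 x).choose).2, Isometry.of_dist_eq fun x y => ?_, ?_⟩
  · rw [hiso2, (hcov1 x).choose_spec, (hcov1 y).choose_spec]
  · apply Set.eq_of_subset_of_subset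
    · rintro z ⟨x, rfl⟩
      exact hC2 _
    · intro c hc
      obtain ⟨i, hi⟩ := hcov2 c hc
      refine ⟨(g i).1, ?_⟩
      have hd0 : dist (g (hcov1 (g i).1).choose).2 c = 0 := by
        rw [← hi, hiso2, (hcov1 (g i).1).choose_spec, dist_self]
      exact dist_eq_zero.mp hd0

end Sauer
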